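/- Let a < c be real numbers, let u ∈ L¹([a,c],ℝ), and let μ be a real number that is not a natural number. Define Ψ : (c,∞) → ℝ by Ψ(t) := ∫_a^c (t−s)^μ u(s) ds. If there exist real numbers c < c₁ < c₂ and a polynomial function p : ℝ → ℝ such that Ψ(t) = p(t) for all t ∈ [c₁,c₂], then u(s) = 0 for almost every s ∈ [a,c]. -/

import Mathlib

open MeasureTheory

private lemma rpow_le_max {lo hi r e : ℝ} (hlo : 0 < lo) (h1 : lo ≤ r) (h2 : r ≤ hi) :
    r ^ e ≤ max (lo ^ e) (hi ^ e) := by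
  rcases le_or_gt 0 e with he | he
  · exact le_max_of_le_right (Real.rpow_le_rpow (hlo.le.trans h1) h2 he)
  · exact le_max_of_le_left (Real.rpow_le_rpow_of_nonpos hlo h1 he.le)

private lemma int_aux {a c : ℝ} (hac : a < c) {u : ℝ → ℝ}
    (hu : IntegrableOn u (Set.Icc a c)) (t ν : ℝ) (ht : c < t) :
    IntegrableOn (fun s => (t - s) ^ ν * u s) (Set.Icc a c) := by
  have hmeas : AEStronglyMeasurable (fun s => (t - s) ^ ν * u s)
      (volume.restrict (Set.Icc a c)) := by
    refine AEStronglyMeasurable.mul ?_ hu.aestronglyMeasurable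
    refine ContinuousOn.aestronglyMeasurable ?_ measurableSet_Icc
    refine ContinuousOn.rpow_const ((continuous_const.sub continuous_id).continuousOn) ?_
    intro s hs
    exact Or.inl (show (0:ℝ) < t - s by linarith [hs.2]).ne'
  refine Integrable.mono' ((hu.norm.const_mul (max ((t - c) ^ ν) ((t - a) ^ ν)))) hmeas ?_
  filter_upwards [ae_restrict_mem measurableSet_Icc] with s hs
  have h1 : 0 < t - c := by linarith
  have h2 : t - c ≤ t - s := by linarith [hs.2]
  have h3 : t - s ≤ t - a := by linarith [hs.1]
  have h4 : 0 ≤ (t - s) ^ ν := Real.rpow_nonneg (by linarith) ν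
  rw [norm_mul, Real.norm_eq_abs ((t - s) ^ ν), abs_of_nonneg h4]
  exact mul_le_mul_of_nonneg_right (rpow_le_max (e := ν) h1 h2 h3) (norm_nonneg _)

private lemma deriv_aux {a c : ℝ} (hac : a < c) {u : ℝ → ℝ}
    (hu : IntegrableOn u (Set.Icc a c)) (ν t₀ : ℝ) (ht : c < t₀) :
    HasDerivAt (fun t => ∫ s in a..c, (t - s) ^ ν * u s)
      (ν * ∫ s in a..c, (t₀ - s) ^ (ν - 1) * u s) t₀ := by
  set ε := (t₀ - c) / 2 with hεdef
  have hε0 : 0 < ε := by simp only [hεdef]; linarith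
  set C := |ν| * max (ε ^ (ν - 1)) ((t₀ + ε - a) ^ (ν - 1)) with hCdef
  have key := intervalIntegral.hasDerivAt_integral_of_dominated_loc_of_deriv_le
    (μ := volume) (a := a) (b := c)
    (F := fun t s => (t - s) ^ ν * u s)
    (F' := fun t s => (ν * (t - s) ^ (ν - 1)) * u s)
    (bound := fun s => C * |u s|) (x₀ := t₀) (s := Metric.ball t₀ ε) (Metric.ball_mem_nhds t₀ hε0) ?_ ?_ ?_ ?_ ?_ ?_
  · have := key.2
    have heq : (∫ s in a..c, (ν * (t₀ - s) ^ (ν - 1)) * u s)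
        = ν * ∫ s in a..c, (t₀ - s) ^ (ν - 1) * u s := by
      rw [← intervalIntegral.integral_const_mul]
      congr 1
      ext s
      ring
    rwa [heq] at this
  · filter_upwards [Ioi_mem_nhds ht] with x hx
    exact ((int_aux hac hu x ν hx).mono_set Set.Ioc_subset_Icc_self).aestronglyMeasurable.mono_measure
      (le_of_eq (by rw [Set.uIoc_of_le hac.le]))
  · rw [intervalIntegrable_iff_integrableOn_Ioc_of_le hac.le]
    exact (int_aux hac hu t₀ ν ht).mono_set Set.Ioc_subset_Icc_self
  · have h := ((int_aux hac hu t₀ (ν - 1) ht).mono_set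
      Set.Ioc_subset_Icc_self).aestronglyMeasurable.const_mul ν
    have h2 : (fun s => ν * ((t₀ - s) ^ (ν - 1) * u s))
        = fun s => (ν * (t₀ - s) ^ (ν - 1)) * u s := by ext s; ring
    rw [h2] at h
    exact h.mono_measure (le_of_eq (by rw [Set.uIoc_of_le hac.le]))
  · refine Filter.Eventually.of_forall ?_
    intro s hs x hx
    rw [Set.uIoc_of_le hac.le] at hs
    rw [Metric.mem_ball, Real.dist_eq] at hx
    have hx1 : t₀ - ε < x := by cases' abs_lt.mp hx with h _; linarith
    have hx2 : x < t₀ + ε := by cases' abs_lt.mp hx with _ h; linarith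
    have hlo : ε ≤ x - s := by
      have : s ≤ c := hs.2
      simp only [hεdef] at hx1 ⊢
      linarith
    have hhi : x - s ≤ t₀ + ε - a := by linarith [hs.1.le]
    have hb := rpow_le_max (e := ν - 1) hε0 hlo hhi
    rw [norm_mul, norm_mul, Real.norm_eq_abs, Real.norm_eq_abs, Real.norm_eq_abs,
      abs_of_nonneg (Real.rpow_nonneg (by linarith) _)]
    rw [hCdef]
    exact mul_le_mul_of_nonneg_right
      (mul_le_mul_of_nonneg_left hb (abs_nonneg ν)) (abs_nonneg _)
  · rw [intervalIntegrable_iff_integrableOn_Ioc_of_le hac.le]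
    have hC : IntegrableOn (fun s => C * ‖u s‖) (Set.Icc a c) := hu.norm.const_mul C
    exact hC.mono_set Set.Ioc_subset_Icc_self
  · refine Filter.Eventually.of_forall ?_
    intro s hs x hx
    rw [Set.uIoc_of_le hac.le] at hs
    rw [Metric.mem_ball, Real.dist_eq] at hx
    have hx1 : t₀ - ε < x := by cases' abs_lt.mp hx with h _; linarith
    have hpos : 0 < x - s := by
      have : s ≤ c := hs.2
      simp only [hεdef] at hx1
      linarith
    have hd : HasDerivAt (fun x => (x - s) ^ ν) (ν * (x - s) ^ (ν - 1)) x := by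
      have h0 : HasDerivAt (fun x : ℝ => x - s) 1 x := (hasDerivAt_id x).sub_const s
      have := h0.rpow_const (p := ν) (Or.inl hpos.ne')
      simpa using this
    exact hd.mul_const (u s)

theorem stmt_12 (a c : ℝ) (hac : a < c) (u : ℝ → ℝ)
    (hu : IntegrableOn u (Set.Icc a c))
    (μ : ℝ) (hμ : ∀ k : ℕ, μ ≠ (k : ℝ))
    (c₁ c₂ : ℝ) (h1 : c < c₁) (h2 : c₁ < c₂) (p : Polynomial ℝ)
    (hp : ∀ t ∈ Set.Icc c₁ c₂, (∫ s in a..c, (t - s) ^ μ * u s) = Polynomial.eval t p) :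
    ∀ᵐ s ∂(volume.restrict (Set.Icc a c)), u s = 0 := by
  -- Step 1: iterated differentiation under the integral sign.
  have key : ∀ k : ℕ, ∀ t ∈ Set.Ioo c₁ c₂,
      (∏ j ∈ Finset.range k, (μ - j)) * (∫ s in a..c, (t - s) ^ (μ - k) * u s)
        = Polynomial.eval t ((Polynomial.derivative)^[k] p) := by
    intro k
    induction k with
    | zero =>
      intro t ht
      simpa using hp t (Set.mem_Icc.mpr ⟨ht.1.le, ht.2.le⟩)
    | succ k ih =>
      intro t ht
      have htc : c < t := lt_trans h1 ht.1
      have hD : HasDerivAt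
          (fun t' => (∏ j ∈ Finset.range k, (μ - j)) * ∫ s in a..c, (t' - s) ^ (μ - k) * u s)
          ((∏ j ∈ Finset.range k, (μ - j)) *
            ((μ - k) * ∫ s in a..c, (t - s) ^ (μ - k - 1) * u s)) t :=
        (deriv_aux hac hu (μ - k) t htc).const_mul _
      have heq : (fun t' => (∏ j ∈ Finset.range k, (μ - j)) *
          ∫ s in a..c, (t' - s) ^ (μ - k) * u s)
          =ᶠ[nhds t] (fun t' => Polynomial.eval t' ((Polynomial.derivative)^[k] p)) := by
        filter_upwards [Ioo_mem_nhds ht.1 ht.2] with x hx using ih x hx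
      have hD2 : HasDerivAt (fun t' => Polynomial.eval t' ((Polynomial.derivative)^[k] p))
          ((∏ j ∈ Finset.range k, (μ - j)) *
            ((μ - k) * ∫ s in a..c, (t - s) ^ (μ - k - 1) * u s)) t :=
        hD.congr_of_eventuallyEq heq.symm
      have hD3 := ((Polynomial.derivative)^[k] p).hasDerivAt t
      have huniq := hD2.unique hD3
      rw [Function.iterate_succ_apply', ← huniq, Finset.prod_range_succ]
      have hexp : μ - ((k : ℝ) + 1) = μ - k - 1 := by ring
      push_cast
      rw [hexp]
      ring
  -- Step 2: extract vanishing moments at a fixed point t₀.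
  set N : ℕ := p.natDegree + 1 with hN
  set t₀ : ℝ := (c₁ + c₂) / 2 with ht₀def
  have ht₀ : t₀ ∈ Set.Ioo c₁ c₂ := ⟨by simp only [ht₀def]; linarith, by simp only [ht₀def]; linarith⟩
  have htc : c < t₀ := lt_trans h1 ht₀.1
  set w : ℝ → ℝ := fun s => (t₀ - s) ^ (μ - (N : ℝ)) * u s with hwdef
  have hw : IntegrableOn w (Set.Icc a c) := int_aux hac hu t₀ (μ - N) htc
  have hmom : ∀ j : ℕ, ∫ s in Set.Ioc a c, ((t₀ - s)⁻¹) ^ j * w s = 0 := by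
    intro j
    have h0 := key (N + j) t₀ ht₀
    rw [Polynomial.iterate_derivative_eq_zero (by omega : p.natDegree < N + j),
      Polynomial.eval_zero] at h0
    have hprod : (∏ i ∈ Finset.range (N + j), (μ - i)) ≠ 0 :=
      Finset.prod_ne_zero_iff.mpr (fun i _ => sub_ne_zero.mpr (hμ i))
    have h1' : (∫ s in a..c, (t₀ - s) ^ (μ - ((N + j : ℕ) : ℝ)) * u s) = 0 :=
      (mul_eq_zero.mp h0).resolve_left hprod
    rw [intervalIntegral.integral_of_le hac.le] at h1'
    rw [← h1']
    refine setIntegral_congr_fun measurableSet_Ioc ?_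
    intro s hs
    have hpos : 0 < t₀ - s := by linarith [hs.2]
    have e1 : μ - ((N + j : ℕ) : ℝ) = (μ - (N : ℝ)) + (-(j : ℝ)) := by push_cast; ring
    simp only [hwdef]
    rw [e1, Real.rpow_add hpos, Real.rpow_neg hpos.le, Real.rpow_natCast, ← inv_pow]
    ring
  -- Integrability of continuous multiples of w.
  have hφcont : ContinuousOn (fun s : ℝ => (t₀ - s)⁻¹) (Set.Icc a c) := by
    refine ContinuousOn.inv₀ ((continuous_const.sub continuous_id).continuousOn) ?_
    intro s hs
    exact (show (0:ℝ) < t₀ - s by linarith [hs.2]).ne'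
  have intg : ∀ G : ℝ → ℝ, Continuous G →
      IntegrableOn (fun s => G ((t₀ - s)⁻¹) * w s) (Set.Ioc a c) := by
    intro G hG
    refine IntegrableOn.mono_set ?_ Set.Ioc_subset_Icc_self
    exact IntegrableOn.continuousOn_mul (hG.comp_continuousOn hφcont) hw isCompact_Icc
  -- Step 3: vanishing against all polynomials in (t₀ - s)⁻¹.
  have hpoly : ∀ q : Polynomial ℝ,
      ∫ s in Set.Ioc a c, Polynomial.eval ((t₀ - s)⁻¹) q * w s = 0 := by
    intro q
    induction q using Polynomial.induction_on' with
    | add f g hf hg =>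
      have hif := intg (fun x => Polynomial.eval x f) (Polynomial.continuous f)
      have hig := intg (fun x => Polynomial.eval x g) (Polynomial.continuous g)
      simp only [Polynomial.eval_add, add_mul]
      rw [integral_add hif hig, hf, hg, add_zero]
    | monomial n b =>
      simp only [Polynomial.eval_monomial, mul_assoc]
      rw [integral_const_mul, hmom n, mul_zero]
  -- Step 4: vanishing against all continuous functions of (t₀ - s)⁻¹.
  set α : ℝ := (t₀ - a)⁻¹ with hαdef
  set β : ℝ := (t₀ - c)⁻¹ with hβdef
  have hα0 : 0 < α := by
    simp only [hαdef]
    have : (0:ℝ) < t₀ - a := by linarith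
    positivity
  have hmemαβ : ∀ s ∈ Set.Ioc a c, (t₀ - s)⁻¹ ∈ Set.Icc α β := by
    intro s hs
    have hs1 : a < s := hs.1
    have hs2 : s ≤ c := hs.2
    have hpos : 0 < t₀ - s := by linarith
    constructor
    · simp only [hαdef]
      apply inv_anti₀ hpos
      linarith
    · simp only [hβdef]
      apply inv_anti₀ (by linarith : (0:ℝ) < t₀ - c)
      linarith
  have hcont : ∀ g : ℝ → ℝ, Continuous g →
      ∫ s in Set.Ioc a c, g ((t₀ - s)⁻¹) * w s = 0 := by
    intro g hg
    set X := ∫ s in Set.Ioc a c, g ((t₀ - s)⁻¹) * w s with hXdef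
    set I := ∫ s in Set.Ioc a c, |w s| with hIdef
    have hI0 : 0 ≤ I := integral_nonneg (fun s => abs_nonneg _)
    have hwIoc : IntegrableOn w (Set.Ioc a c) := hw.mono_set Set.Ioc_subset_Icc_self
    have hkey : ∀ ε : ℝ, 0 < ε → |X| ≤ ε * I := by
      intro ε hε
      obtain ⟨q, hq⟩ := exists_polynomial_near_of_continuousOn α β g
        (hg.continuousOn) ε hε
      have h0 := hpoly q
      have hsub : X = ∫ s in Set.Ioc a c,
          (g ((t₀ - s)⁻¹) - Polynomial.eval ((t₀ - s)⁻¹) q) * w s := by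
        simp only [sub_mul]
        rw [integral_sub (intg g hg) (intg _ (Polynomial.continuous q)), h0, sub_zero]
      rw [hsub]
      have := norm_integral_le_of_norm_le (f := fun s =>
          (g ((t₀ - s)⁻¹) - Polynomial.eval ((t₀ - s)⁻¹) q) * w s)
          (g := fun s => ε * |w s|) (hwIoc.norm.const_mul ε) ?_
      · rw [integral_const_mul] at this
        simpa [Real.norm_eq_abs, hIdef] using this
      · filter_upwards [ae_restrict_mem measurableSet_Ioc] with s hs
        have hmem := hmemαβ s hs
        have hlt := hq _ hmem
        rw [Real.norm_eq_abs, abs_mul]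
        refine mul_le_mul_of_nonneg_right ?_ (abs_nonneg _)
        rw [abs_sub_comm]
        exact hlt.le
    by_contra hX
    have hXpos : 0 < |X| := abs_pos.mpr hX
    have := hkey (|X| / (2 * (I + 1))) (by positivity)
    have hle : |X| / (2 * (I + 1)) * I ≤ |X| / 2 := by
      rw [div_mul_eq_mul_div, div_le_div_iff₀ (by positivity) (by norm_num)]
      nlinarith
    linarith
  -- Step 5: vanishing against smooth compactly supported functions, conclude w = 0 a.e.
  have hw0 : ∀ᵐ s ∂(volume.restrict (Set.Ioc a c)), w s = 0 := by
    refine ae_eq_zero_of_integral_contDiff_smul_eq_zero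
      ((hw.mono_set Set.Ioc_subset_Icc_self).locallyIntegrable) ?_
    intro g hgs _
    have hGc : Continuous (fun x : ℝ => g (t₀ - (max x α)⁻¹)) := by
      have h1' : Continuous fun x : ℝ => (max x α)⁻¹ :=
        (continuous_id.max continuous_const).inv₀
          (fun x => ne_of_gt (lt_of_lt_of_le hα0 (le_max_right _ _)))
      exact hgs.continuous.comp (continuous_const.sub h1')
    have h0 := hcont _ hGc
    rw [← h0]
    simp only [smul_eq_mul]
    refine setIntegral_congr_fun measurableSet_Ioc ?_
    intro s hs
    have hpos : 0 < t₀ - s := by linarith [hs.2]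
    have hmax : max ((t₀ - s)⁻¹) α = (t₀ - s)⁻¹ := max_eq_left (hmemαβ s hs).1
    simp only [hmax, inv_inv, sub_sub_cancel]
  -- Step 6: conclude u = 0 a.e.
  have hres : volume.restrict (Set.Icc a c) = volume.restrict (Set.Ioc a c) :=
    Measure.restrict_congr_set Ioc_ae_eq_Icc.symm
  rw [hres]
  filter_upwards [hw0, ae_restrict_mem measurableSet_Ioc] with s hws hs
  have hpos : 0 < t₀ - s := by linarith [hs.2]
  have hne : (t₀ - s) ^ (μ - (N : ℝ)) ≠ 0 := (Real.rpow_pos_of_pos hpos _).ne'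
  have : (t₀ - s) ^ (μ - (N : ℝ)) * u s = 0 := hws
  exact (mul_eq_zero.mp this).resolve_left hne
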